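/- Let ν and k be nonnegative integers such that p₁ := k and p₂ := k + ν are both prime and 2ν < p₁, and let n be a positive integer. Then W_n(ν; 2k) ≡ n (mod p₁p₂); that is, the p₁-adic valuation of W_n(ν;2k) − n is at least 1 and the p₂-adic valuation of W_n(ν;2k) − n is at least 1. -/

import Mathlib

/-- A rational is "Good p" if it is `p` times a fraction whose denominator is prime to `p`. -/
def Good (p : ℕ) (q : ℚ) : Prop := ∃ a b : ℤ, ¬ (p:ℤ) ∣ b ∧ q = (p:ℚ) * ((a:ℚ) / (b:ℚ))

lemma good_zero {p : ℕ} (hp : p.Prime) : Good p 0 :=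
  ⟨0, 1, by intro h; have h2 := Int.le_of_dvd one_pos h; have := hp.two_le; omega, by simp⟩

lemma good_add {p : ℕ} (hp : p.Prime) {q r : ℚ} (hq : Good p q) (hr : Good p r) :
    Good p (q + r) := by
  obtain ⟨a, b, hb, rfl⟩ := hq
  obtain ⟨c, d, hd, rfl⟩ := hr
  have hpz : Prime (p : ℤ) := Nat.prime_iff_prime_int.mp hp
  refine ⟨a * d + c * b, b * d, ?_, ?_⟩
  · intro h
    rcases hpz.dvd_mul.mp h with h | h
    · exact hb h
    · exact hd h
  · have hb0 : (b:ℚ) ≠ 0 := by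
      intro h; apply hb; rw [Int.cast_eq_zero] at h; simp [h]
    have hd0 : (d:ℚ) ≠ 0 := by
      intro h; apply hd; rw [Int.cast_eq_zero] at h; simp [h]
    push_cast
    field_simp

lemma good_sum {p : ℕ} (hp : p.Prime) {α : Type*} (s : Finset α) (g : α → ℚ)
    (h : ∀ a ∈ s, Good p (g a)) : Good p (∑ a ∈ s, g a) := by
  classical
  induction s using Finset.induction_on with
  | empty => simpa using good_zero hp
  | insert _ _ hx ih =>
    rw [Finset.sum_insert hx]
    exact good_add hp (h _ (Finset.mem_insert_self _ _))
      (ih fun a ha => h a (Finset.mem_insert_of_mem ha))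

lemma good_div {p : ℕ} (hp : p.Prime) (N D : ℕ) (hD : D ≠ 0)
    (h : p ^ (padicValNat p D + 1) ∣ N) : Good p ((N : ℚ) / (D : ℚ)) := by
  rcases eq_or_ne N 0 with rfl | hN
  · simpa using good_zero hp
  set t := padicValNat p D with ht
  obtain ⟨M, hM⟩ := h
  set D' := D / p ^ t with hD'
  have hDeq : p ^ t * D' = D := by
    rw [hD', ht, ← Nat.factorization_def D hp]
    exact Nat.ordProj_mul_ordCompl_eq_self D p
  have hpD' : ¬ p ∣ D' := by
    rw [hD', ht, ← Nat.factorization_def D hp]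
    exact Nat.not_dvd_ordCompl hp hD
  refine ⟨M, D', by exact_mod_cast hpD', ?_⟩
  have hp0 : (p : ℚ) ≠ 0 := by exact_mod_cast hp.pos.ne'
  have hD'0 : (D' : ℚ) ≠ 0 := by
    have : D' ≠ 0 := fun h0 => hpD' (h0 ▸ dvd_zero p)
    exact_mod_cast this
  rw [hM, ← hDeq]
  push_cast
  field_simp
  ring

lemma bad_eq (n k : ℕ) :
    (Finset.Nat.antidiagonalTuple n k).filter (fun f => ¬ ∀ i, f i < k)
      = Finset.univ.image (fun i : Fin n => (Pi.single i k : Fin n → ℕ)) := by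
  ext f
  simp only [Finset.mem_filter, Finset.Nat.mem_antidiagonalTuple, Finset.mem_image,
    Finset.mem_univ, true_and]
  constructor
  · rintro ⟨hs, hlt⟩
    push_neg at hlt
    obtain ⟨i, hi⟩ := hlt
    have hile : f i ≤ k := hs ▸ Finset.single_le_sum (fun j _ => Nat.zero_le _) (Finset.mem_univ i)
    have hfi : f i = k := le_antisymm hile hi
    refine ⟨i, ?_⟩
    funext j
    by_cases hji : j = i
    · subst hji; simp [hfi]
    · have hsum := Finset.add_sum_erase Finset.univ f (Finset.mem_univ i)
      have h0 : ∑ j ∈ Finset.univ.erase i, f j = 0 := by omega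
      have hfj := Finset.sum_eq_zero_iff.mp h0 j (Finset.mem_erase.mpr ⟨hji, Finset.mem_univ j⟩)
      rw [hfj, Pi.single_eq_of_ne hji]
  · rintro ⟨i, rfl⟩
    refine ⟨by simp, ?_⟩
    push_neg
    exact ⟨i, by simp⟩

lemma T_single (n ν k : ℕ) (i : Fin n) :
    ((k.factorial : ℚ) * ((k + ν).factorial : ℚ) * ((ν.factorial : ℚ)) ^ (n - 1)) /
      ((∏ j, (((Pi.single i k : Fin n → ℕ) j).factorial : ℚ)) *
        ∏ j, (((Pi.single i k : Fin n → ℕ) j + ν).factorial : ℚ)) = 1 := by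
  have h1 : (∏ j, (((Pi.single i k : Fin n → ℕ) j).factorial : ℚ)) = k.factorial := by
    rw [← Finset.mul_prod_erase _ _ (Finset.mem_univ i), Pi.single_eq_same]
    rw [Finset.prod_congr rfl (fun j hj => ?_), Finset.prod_const_one, mul_one]
    rw [Pi.single_eq_of_ne (Finset.mem_erase.mp hj).1]
    simp
  have h2 : (∏ j, (((Pi.single i k : Fin n → ℕ) j + ν).factorial : ℚ))
      = ((k + ν).factorial : ℚ) * (ν.factorial : ℚ) ^ (n - 1) := by
    rw [← Finset.mul_prod_erase _ _ (Finset.mem_univ i), Pi.single_eq_same]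
    congr 1
    rw [Finset.prod_congr rfl (fun j hj => ?_), Finset.prod_const]
    · rw [Finset.card_erase_of_mem (Finset.mem_univ i), Finset.card_univ, Fintype.card_fin]
    · rw [Pi.single_eq_of_ne (Finset.mem_erase.mp hj).1, zero_add]
  rw [h1, h2]
  have f1 : (0:ℚ) < k.factorial := by exact_mod_cast k.factorial_pos
  have f2 : (0:ℚ) < (k + ν).factorial := by exact_mod_cast (k + ν).factorial_pos
  have f3 : (0:ℚ) < ν.factorial := by exact_mod_cast ν.factorial_pos
  have hne : (k.factorial : ℚ) * ((k + ν).factorial * (ν.factorial:ℚ) ^ (n-1)) ≠ 0 := by positivity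
  field_simp

lemma single_injective (n k : ℕ) (hk : k ≠ 0) :
    Function.Injective (fun i : Fin n => (Pi.single i k : Fin n → ℕ)) := by
  intro i j h
  by_contra hij
  have h2 : (Pi.single i k : Fin n → ℕ) i = (Pi.single j k : Fin n → ℕ) i := congrFun h i
  rw [Pi.single_eq_same, Pi.single_eq_of_ne hij] at h2
  exact hk h2

lemma fact_val_le_one {p : ℕ} (hp : p.Prime) {m : ℕ} (hm : m < 2 * p) :
    (m.factorial).factorization p ≤ 1 := by
  haveI : Fact p.Prime := ⟨hp⟩
  rw [Nat.factorization_def _ hp]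
  have hlog : Nat.log p m < 2 := by
    rcases eq_or_ne m 0 with rfl | hm0
    · simp
    · refine Nat.log_lt_of_lt_pow hm0 ?_
      have := hp.two_le
      calc m < 2 * p := hm
        _ ≤ p * p := by nlinarith
        _ = p ^ 2 := (sq p).symm
  rw [padicValNat_factorial hlog]
  have : Finset.Ico 1 2 = {1} := rfl
  rw [this, Finset.sum_singleton, pow_one]
  have hp0 : 0 < p := hp.pos
  exact Nat.lt_succ_iff.mp ((Nat.div_lt_iff_lt_mul hp0).mpr hm)

lemma term_good (ν k : ℕ) (hp1 : k.Prime) (hp2 : (k + ν).Prime) (hν : 2 * ν < k) (n : ℕ)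
    (f : Fin n → ℕ) (hsum : ∑ i, f i = k) (hlt : ∀ i, f i < k) (p : ℕ)
    (hp : p = k ∨ p = k + ν) :
    Good p (((k.factorial : ℚ) * ((k + ν).factorial : ℚ) * ((ν.factorial : ℚ)) ^ (n - 1)) /
      ((∏ i, ((f i).factorial : ℚ)) * ∏ i, ((f i + ν).factorial : ℚ))) := by
  have hνk : ν < k := by omega
  set N : ℕ := k.factorial * (k + ν).factorial * ν.factorial ^ (n - 1) with hN
  set D : ℕ := (∏ i, (f i).factorial) * ∏ i, (f i + ν).factorial with hD
  have hexp : ((k.factorial : ℚ) * ((k + ν).factorial : ℚ) * ((ν.factorial : ℚ)) ^ (n - 1)) /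
      ((∏ i, ((f i).factorial : ℚ)) * ∏ i, ((f i + ν).factorial : ℚ)) = (N : ℚ) / (D : ℚ) := by
    rw [hN, hD]; push_cast; rfl
  rw [hexp]
  have hD1 : (∏ i, (f i).factorial) ≠ 0 :=
    Finset.prod_ne_zero_iff.mpr fun i _ => (Nat.factorial_pos _).ne'
  have hD2 : (∏ i, (f i + ν).factorial) ≠ 0 :=
    Finset.prod_ne_zero_iff.mpr fun i _ => (Nat.factorial_pos _).ne'
  have hD0 : D ≠ 0 := mul_ne_zero hD1 hD2
  have hvalD : ∀ q : ℕ, q.Prime → k ≤ q → padicValNat q D ≤ 1 := by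
    intro q hq hkq
    rw [← Nat.factorization_def _ hq, hD, Nat.factorization_mul hD1 hD2,
      Nat.factorization_prod (fun i _ => (Nat.factorial_pos _).ne'),
      Nat.factorization_prod (fun i _ => (Nat.factorial_pos _).ne')]
    simp only [Finsupp.coe_add, Pi.add_apply, Finsupp.finset_sum_apply]
    have hz : ∀ i : Fin n, ((f i).factorial).factorization q = 0 := fun i =>
      Nat.factorization_eq_zero_of_not_dvd
        (fun h => absurd ((Nat.Prime.dvd_factorial hq).mp h) (not_le.mpr (by have := hlt i; omega)))
    rw [Finset.sum_congr rfl (fun i _ => hz i), Finset.sum_const_zero, zero_add]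
    rw [← Finset.sum_filter_add_sum_filter_not Finset.univ (fun i => q ≤ f i + ν)]
    have h2 : ∑ i ∈ Finset.univ.filter (fun i => ¬ q ≤ f i + ν),
        ((f i + ν).factorial).factorization q = 0 := by
      refine Finset.sum_eq_zero fun i hi => ?_
      have := (Finset.mem_filter.mp hi).2
      exact Nat.factorization_eq_zero_of_not_dvd
        (fun h => absurd ((Nat.Prime.dvd_factorial hq).mp h) this)
    rw [h2, add_zero]
    have hcard : (Finset.univ.filter (fun i => q ≤ f i + ν)).card ≤ 1 := by
      refine Finset.card_le_one.mpr fun a ha b hb => ?_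
      simp only [Finset.mem_filter] at ha hb
      by_contra hab
      have hpair : f a + f b ≤ k := by
        have h1 : ∑ x ∈ ({a, b} : Finset (Fin n)), f x ≤ ∑ x, f x :=
          Finset.sum_le_sum_of_subset (Finset.subset_univ _)
        rw [Finset.sum_pair hab, hsum] at h1
        exact h1
      have ha2 := ha.2
      have hb2 := hb.2
      omega
    calc ∑ i ∈ Finset.univ.filter (fun i => q ≤ f i + ν),
          ((f i + ν).factorial).factorization q
        ≤ ∑ _i ∈ Finset.univ.filter (fun i => q ≤ f i + ν), 1 := by
          refine Finset.sum_le_sum fun i _ => ?_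
          exact fact_val_le_one hq (by have := hlt i; omega)
      _ = (Finset.univ.filter (fun i => q ≤ f i + ν)).card := by
          rw [Finset.sum_const, smul_eq_mul, mul_one]
      _ ≤ 1 := hcard
  rcases hp with rfl | rfl
  · refine good_div hp1 N D hD0 ?_
    have hval : padicValNat p D ≤ 1 := hvalD p hp1 le_rfl
    have hsq : p ^ 2 ∣ N := by
      have d1 : p ∣ p.factorial := Nat.dvd_factorial hp1.pos le_rfl
      have d2 : p ∣ (p + ν).factorial := Nat.dvd_factorial hp1.pos (Nat.le_add_right _ _)
      calc p ^ 2 = p * p := sq p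
        _ ∣ p.factorial * (p + ν).factorial := mul_dvd_mul d1 d2
        _ ∣ N := ⟨ν.factorial ^ (n - 1), by rw [hN]⟩
    exact dvd_trans (pow_dvd_pow p (by omega)) hsq
  · refine good_div hp2 N D hD0 ?_
    have hval : padicValNat (k + ν) D = 0 := by
      refine padicValNat.eq_zero_of_not_dvd ?_
      intro h
      rw [hD] at h
      rcases (Nat.Prime.dvd_mul hp2).mp h with h | h
      · obtain ⟨i, _, hi⟩ := (hp2.prime.dvd_finset_prod_iff _).mp h
        have h1 := (Nat.Prime.dvd_factorial hp2).mp hi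
        have := hlt i
        omega
      · obtain ⟨i, _, hi⟩ := (hp2.prime.dvd_finset_prod_iff _).mp h
        have h1 := (Nat.Prime.dvd_factorial hp2).mp hi
        have := hlt i
        omega
    rw [hval]
    have d2 : (k + ν) ∣ (k + ν).factorial := Nat.dvd_factorial hp2.pos le_rfl
    calc (k + ν) ^ (0 + 1) = k + ν := by rw [zero_add, pow_one]
      _ ∣ (k + ν).factorial := d2
      _ ∣ N := ⟨k.factorial * ν.factorial ^ (n - 1), by rw [hN]; ring⟩

/-- `W n ν k` is the `2k`-th moment `W_n(ν; 2k)`, given as a sum over all `n`-tuples of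
nonnegative integers summing to `k`. -/
def W (n ν k : ℕ) : ℚ :=
  ∑ f ∈ Finset.Nat.antidiagonalTuple n k,
    ((k.factorial : ℚ) * ((k + ν).factorial : ℚ) * ((ν.factorial : ℚ)) ^ (n - 1)) /
      ((∏ i, ((f i).factorial : ℚ)) * ∏ i, ((f i + ν).factorial : ℚ))

/-- If `p₁ := k` and `p₂ := k + ν` are both prime with `2ν < k`, then
`W_n(ν;2k) ≡ n (mod p₁p₂)`: the difference `W_n(ν;2k) − n` is `p₁·(a/b)` with `p₁ ∤ b`
and also `p₂·(c/d)` with `p₂ ∤ d`. -/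
theorem stmt11 (ν k : ℕ) (hp1 : k.Prime) (hp2 : (k + ν).Prime) (hν : 2 * ν < k)
    (n : ℕ) (hn : 0 < n) :
    (∃ a b : ℤ, ¬ (k : ℤ) ∣ b ∧ W n ν k - (n : ℚ) = (k : ℚ) * ((a : ℚ) / (b : ℚ))) ∧
    (∃ c d : ℤ, ¬ ((k + ν : ℕ) : ℤ) ∣ d ∧
      W n ν k - (n : ℚ) = ((k + ν : ℕ) : ℚ) * ((c : ℚ) / (d : ℚ))) := by
  classical
  set T : (Fin n → ℕ) → ℚ := fun f =>
    ((k.factorial : ℚ) * ((k + ν).factorial : ℚ) * ((ν.factorial : ℚ)) ^ (n - 1)) /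
      ((∏ i, ((f i).factorial : ℚ)) * ∏ i, ((f i + ν).factorial : ℚ)) with hT
  have hsplit : W n ν k - (n : ℚ)
      = ∑ f ∈ (Finset.Nat.antidiagonalTuple n k).filter (fun f => ∀ i, f i < k), T f := by
    have h1 : W n ν k
        = (∑ f ∈ (Finset.Nat.antidiagonalTuple n k).filter (fun f => ∀ i, f i < k), T f)
          + ∑ f ∈ (Finset.Nat.antidiagonalTuple n k).filter (fun f => ¬ ∀ i, f i < k), T f := by
      rw [W, ← Finset.sum_filter_add_sum_filter_not _ (fun f => ∀ i, f i < k) T]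
    have h2 : ∑ f ∈ (Finset.Nat.antidiagonalTuple n k).filter (fun f => ¬ ∀ i, f i < k), T f
        = (n : ℚ) := by
      rw [bad_eq n k, Finset.sum_image (fun i _ j _ h => single_injective n k hp1.pos.ne' h)]
      rw [Finset.sum_congr rfl (fun i _ => T_single n ν k i), Finset.sum_const,
        Finset.card_univ, Fintype.card_fin, nsmul_eq_mul, mul_one]
    rw [h1, h2]
    ring
  have key : ∀ p : ℕ, (p = k ∨ p = k + ν) → Good p (W n ν k - (n : ℚ)) := by
    intro p hp
    rw [hsplit]
    refine good_sum ?_ _ _ fun f hf => ?_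
    · rcases hp with rfl | rfl
      · exact hp1
      · exact hp2
    · rw [Finset.mem_filter, Finset.Nat.mem_antidiagonalTuple] at hf
      exact term_good ν k hp1 hp2 hν n f hf.1 hf.2 p hp
  obtain ⟨a, b, hb, he⟩ := key k (Or.inl rfl)
  obtain ⟨c, d, hd, he2⟩ := key (k + ν) (Or.inr rfl)
  exact ⟨⟨a, b, hb, he⟩, ⟨c, d, hd, he2⟩⟩
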